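/- Let n be a positive integer and let G be any subgroup of ℝ^{2n}. Then ℂ*G is a domain: if α, β ∈ ℂ*G and αβ = 0 in B(L²(ℝⁿ)), then α = 0 or β = 0. -/

import Mathlib

set_option maxHeartbeats 1000000
set_option synthInstance.maxHeartbeats 1000000

open MeasureTheory Complex

noncomputable section

abbrev RV (n : ℕ) := Fin n → ℝ

abbrev L2 (n : ℕ) := Lp ℂ 2 (volume : Measure (RV n))

/-- The dot product on `ℝⁿ`. -/
def dotR {n : ℕ} (x y : RV n) : ℝ := ∑ i, x i * y i

/-- The function `t ↦ e^{2πi y·t} f(t+x)`. -/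
def tfsFun {n : ℕ} (x y : RV n) (f : RV n → ℂ) : RV n → ℂ :=
  fun t => Complex.exp (((2 * Real.pi * dotR y t : ℝ) : ℂ) * Complex.I) * f (t + x)

lemma memLp_tfsFun {n : ℕ} (x y : RV n) (f : L2 n) :
    MemLp (tfsFun x y (f : RV n → ℂ)) 2 (volume : Measure (RV n)) := by
  have hmp : MeasurePreserving (fun t : RV n => t + x) volume volume :=
    measurePreserving_add_right volume x
  have h1 : MemLp (fun t : RV n => (f : RV n → ℂ) (t + x)) 2 volume :=
    (Lp.memLp f).comp_measurePreserving hmp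
  have hcont : Continuous fun t : RV n =>
      Complex.exp (((2 * Real.pi * dotR y t : ℝ) : ℂ) * Complex.I) := by
    unfold dotR
    fun_prop
  refine MemLp.of_le h1 (hcont.aestronglyMeasurable.mul h1.1) ?_
  filter_upwards with t
  simp only [tfsFun, norm_mul]
  rw [Complex.norm_exp_ofReal_mul_I, one_mul]
lemma tfsFun_congr {n : ℕ} (x y : RV n) {f g : RV n → ℂ}
    (h : f =ᵐ[(volume : Measure (RV n))] g) :
    tfsFun x y f =ᵐ[(volume : Measure (RV n))] tfsFun x y g := by
  have hmp : MeasurePreserving (fun t : RV n => t + x) volume volume :=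
    measurePreserving_add_right volume x
  have h2 := hmp.quasiMeasurePreserving.ae_eq_comp h
  filter_upwards [h2] with t ht
  simp only [Function.comp] at ht
  simp [tfsFun, ht]

/-- The time-frequency shift `π(x,y)` as a bounded operator on `L²(ℝⁿ)`:
`(π(x,y)f)(t) = e^{2πi y·t} f(t+x)`. -/
def TFS {n : ℕ} (x y : RV n) : L2 n →L[ℂ] L2 n :=
  LinearMap.mkContinuous
    { toFun := fun f => (memLp_tfsFun x y f).toLp _
      map_add' := fun f g => by
        apply Lp.ext
        have h6 := tfsFun_congr x y (Lp.coeFn_add f g)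
        filter_upwards [(memLp_tfsFun x y (f + g)).coeFn_toLp, h6,
          Lp.coeFn_add ((memLp_tfsFun x y f).toLp _) ((memLp_tfsFun x y g).toLp _),
          (memLp_tfsFun x y f).coeFn_toLp, (memLp_tfsFun x y g).coeFn_toLp]
          with t e1 e6 e4 e2 e3
        rw [e1, e6, e4, Pi.add_apply, e2, e3]
        simp [tfsFun, mul_add]
      map_smul' := fun c f => by
        apply Lp.ext
        have h6 := tfsFun_congr x y (Lp.coeFn_smul c f)
        filter_upwards [(memLp_tfsFun x y (c • f)).coeFn_toLp, h6,
          Lp.coeFn_smul c ((memLp_tfsFun x y f).toLp _),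
          (memLp_tfsFun x y f).coeFn_toLp]
          with t e1 e6 e4 e2
        simp only [RingHom.id_apply]
        rw [e1, e6, e4, Pi.smul_apply, e2]
        simp [tfsFun]
        ring }
    1
    (fun f => by
      have hmp : MeasurePreserving (fun t : RV n => t + x) volume volume :=
        measurePreserving_add_right volume x
      simp only [LinearMap.coe_mk, AddHom.coe_mk, one_mul]
      rw [Lp.norm_toLp _ (memLp_tfsFun x y f), Lp.norm_def]
      refine ENNReal.toReal_mono (Lp.eLpNorm_ne_top f) ?_
      have h1 : eLpNorm (tfsFun x y (f : RV n → ℂ)) 2 volume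
          ≤ eLpNorm (((f : RV n → ℂ)) ∘ (fun t => t + x)) 2 volume := by
        refine eLpNorm_mono_ae ?_
        filter_upwards with t
        simp only [tfsFun, norm_mul, Function.comp]
        rw [Complex.norm_exp_ofReal_mul_I, one_mul]
      refine h1.trans ?_
      rw [eLpNorm_comp_measurePreserving (Lp.aestronglyMeasurable f) hmp])

/-- `π(g)` for `g = (x,y) ∈ ℝ²ⁿ`. -/
def TFSp {n : ℕ} (g : RV n × RV n) : L2 n →L[ℂ] L2 n := TFS g.1 g.2

lemma TFS_coeFn {n : ℕ} (x y : RV n) (f : L2 n) :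
    (TFS x y f : RV n → ℂ) =ᵐ[(volume : Measure (RV n))] tfsFun x y (f : RV n → ℂ) :=
  (memLp_tfsFun x y f).coeFn_toLp

lemma dotR_comm {n : ℕ} (x y : RV n) : dotR x y = dotR y x := by
  simp [dotR, mul_comm]

lemma dotR_add_right {n : ℕ} (y t a : RV n) : dotR y (t + a) = dotR y t + dotR y a := by
  simp [dotR, mul_add, Finset.sum_add_distrib]

lemma dotR_add_left {n : ℕ} (b d t : RV n) : dotR (b + d) t = dotR b t + dotR d t := by
  simp [dotR, add_mul, Finset.sum_add_distrib]

lemma TFS_one {n : ℕ} : TFS (0 : RV n) (0 : RV n) = 1 := by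
  refine ContinuousLinearMap.ext fun f => ?_
  apply Lp.ext
  filter_upwards [TFS_coeFn (0 : RV n) 0 f] with t ht
  rw [ht]
  simp [tfsFun, dotR]

lemma TFS_mul {n : ℕ} (a b c d : RV n) :
    TFS a b * TFS c d
      = Complex.exp (((2 * Real.pi * dotR a d : ℝ) : ℂ) * Complex.I) • TFS (a + c) (b + d) := by
  refine ContinuousLinearMap.ext fun f => ?_
  apply Lp.ext
  have h1 := TFS_coeFn a b (TFS c d f)
  have h2 := tfsFun_congr a b (TFS_coeFn c d f)
  have h3 := Lp.coeFn_smul (Complex.exp (((2 * Real.pi * dotR a d : ℝ) : ℂ) * Complex.I))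
    (TFS (a + c) (b + d) f)
  filter_upwards [h1, h2, h3, TFS_coeFn (a + c) (b + d) f] with t e1 e2 e3 e4
  show (TFS a b) ((TFS c d) f) t = _
  rw [ContinuousLinearMap.smul_apply, e1, e2, e3, Pi.smul_apply, e4]
  simp only [tfsFun, smul_eq_mul]
  rw [add_assoc, ← mul_assoc, ← mul_assoc, ← Complex.exp_add, ← Complex.exp_add]
  congr 2
  rw [← add_mul, ← add_mul]
  congr 1
  push_cast
  rw [dotR_add_right, dotR_add_left, dotR_comm a d]
  push_cast
  ring

lemma TFSp_mul {n : ℕ} (g h : RV n × RV n) :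
    TFSp g * TFSp h
      = Complex.exp (((2 * Real.pi * dotR g.1 h.2 : ℝ) : ℂ) * Complex.I) • TFSp (g + h) :=
  TFS_mul g.1 g.2 h.1 h.2

/-- The linear span of the `π(g)`, `g ∈ G`, inside `B(L²(ℝⁿ))`, as a `ℂ`-submodule. -/
def spanTFS (n : ℕ) (G : AddSubgroup (RV n × RV n)) : Submodule ℂ (L2 n →L[ℂ] L2 n) :=
  Submodule.span ℂ (Set.range fun g : G => TFSp (g : RV n × RV n))

lemma one_mem_spanTFS (n : ℕ) (G : AddSubgroup (RV n × RV n)) :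
    (1 : L2 n →L[ℂ] L2 n) ∈ spanTFS n G := by
  refine Submodule.subset_span ⟨0, ?_⟩
  show TFSp ((0 : RV n × RV n)) = 1
  exact TFS_one

lemma mul_mem_spanTFS {n : ℕ} {G : AddSubgroup (RV n × RV n)}
    {x y : L2 n →L[ℂ] L2 n} (hx : x ∈ spanTFS n G) (hy : y ∈ spanTFS n G) :
    x * y ∈ spanTFS n G := by
  have h : spanTFS n G * spanTFS n G ≤ spanTFS n G := by
    rw [spanTFS, Submodule.span_mul_span]
    refine Submodule.span_le.2 ?_
    rintro z ⟨u, ⟨g, rfl⟩, v, ⟨k, rfl⟩, rfl⟩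
    show TFSp (g : RV n × RV n) * TFSp (k : RV n × RV n) ∈ _
    rw [TFSp_mul]
    refine Submodule.smul_mem _ _ (Submodule.subset_span ⟨g + k, ?_⟩)
    norm_cast
  exact h (Submodule.mul_mem_mul hx hy)

/-- `ℂ*G`: the linear span of the `π(g)`, `g ∈ G`, as a subalgebra of `B(L²(ℝⁿ))`. -/
def CGalg (n : ℕ) (G : AddSubgroup (RV n × RV n)) : Subalgebra ℂ (L2 n →L[ℂ] L2 n) :=
  (spanTFS n G).toSubalgebra (one_mem_spanTFS n G) (fun _ _ => mul_mem_spanTFS)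

/-- `W*G`: the von Neumann algebra generated by `ℂ*G`, realized as the double
commutant of `ℂ*G` in `B(L²(ℝⁿ))`. -/
def WstarAlg (n : ℕ) (G : AddSubgroup (RV n × RV n)) : Subalgebra ℂ (L2 n →L[ℂ] L2 n) :=
  Subalgebra.centralizer ℂ
    ((Subalgebra.centralizer ℂ ((spanTFS n G : Set (L2 n →L[ℂ] L2 n)))) :
      Set (L2 n →L[ℂ] L2 n))

lemma TFSp_mem_WstarAlg {n : ℕ} {G : AddSubgroup (RV n × RV n)} (g : G) :
    TFSp (g : RV n × RV n) ∈ WstarAlg n G := by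
  rw [WstarAlg, Subalgebra.mem_centralizer_iff]
  intro c hc
  rw [SetLike.mem_coe, Subalgebra.mem_centralizer_iff] at hc
  exact (hc _ (Submodule.subset_span ⟨g, rfl⟩)).symm


/-! ### Auxiliary material for Statement 6 -/

section Statement6Aux

lemma dotR_zero_left {n : ℕ} (t : RV n) : dotR 0 t = 0 := by simp [dotR]
lemma dotR_zero_right {n : ℕ} (t : RV n) : dotR t 0 = 0 := by simp [dotR]
lemma dotR_neg_right {n : ℕ} (x y : RV n) : dotR x (-y) = -dotR x y := by
  simp [dotR]
lemma dotR_smul_left {n : ℕ} (t : ℝ) (x y : RV n) : dotR (t • x) y = t * dotR x y := by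
  simp [dotR, Finset.mul_sum, mul_assoc]
lemma dotR_smul_right {n : ℕ} (t : ℝ) (x y : RV n) : dotR x (t • y) = t * dotR x y := by
  simp only [dotR, Pi.smul_apply, smul_eq_mul, Finset.mul_sum]
  exact Finset.sum_congr rfl fun i _ => by ring
lemma dotR_sub_right {n : ℕ} (x y z : RV n) : dotR x (y - z) = dotR x y - dotR x z := by
  simp [dotR, mul_sub, Finset.sum_sub_distrib]
lemma dotR_sub_left {n : ℕ} (x y z : RV n) : dotR (x - y) z = dotR x z - dotR y z := by
  simp [dotR, sub_mul, Finset.sum_sub_distrib]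
lemma dotR_self_nonneg {n : ℕ} (x : RV n) : 0 ≤ dotR x x :=
  Finset.sum_nonneg fun _ _ => mul_self_nonneg _
lemma dotR_self_eq_zero {n : ℕ} {x : RV n} (h : dotR x x = 0) : x = 0 := by
  funext i
  have h2 := (Finset.sum_eq_zero_iff_of_nonneg (fun j _ => mul_self_nonneg (x j))).1 h i
    (Finset.mem_univ i)
  simpa using mul_self_eq_zero.1 h2

/-- `e2pi r = e^{2πir}`. -/
def e2pi (r : ℝ) : ℂ := Complex.exp (((2 * Real.pi * r : ℝ) : ℂ) * Complex.I)
lemma e2pi_ne_zero (r : ℝ) : e2pi r ≠ 0 := Complex.exp_ne_zero _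
lemma e2pi_add (r s : ℝ) : e2pi (r + s) = e2pi r * e2pi s := by
  rw [e2pi, e2pi, e2pi, ← Complex.exp_add]
  congr 1
  push_cast
  ring
lemma e2pi_zero : e2pi 0 = 1 := by simp [e2pi]
lemma e2pi_half : e2pi (1/2) = -1 := by
  rw [e2pi]
  have h : (2 * Real.pi * (1/2) : ℝ) = Real.pi := by ring
  rw [h]
  exact_mod_cast Complex.exp_pi_mul_I

lemma TFSp_mul' {n : ℕ} (g h : RV n × RV n) :
    TFSp g * TFSp h = e2pi (dotR g.1 h.2) • TFSp (g + h) := TFSp_mul g h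

lemma TFSp_zero {n : ℕ} : TFSp (0 : RV n × RV n) = 1 := TFS_one

/-- The symplectic-type form `σ(z,s) = z₁·s₂ − s₁·z₂`. -/
def sform {n : ℕ} (z s : RV n × RV n) : ℝ := dotR z.1 s.2 - dotR s.1 z.2

lemma TFSp_conj {n : ℕ} (z s : RV n × RV n) :
    TFSp z * TFSp s * TFSp (-z)
      = e2pi (-(dotR z.1 z.2)) • (e2pi (sform z s) • TFSp s) := by
  rw [TFSp_mul', smul_mul_assoc, TFSp_mul']
  have h1 : z + s + -z = s := by abel
  rw [h1, smul_smul, smul_smul]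
  congr 1
  rw [← e2pi_add, ← e2pi_add]
  congr 1
  simp only [Prod.fst_add, Prod.snd_neg, sform, dotR_neg_right, dotR_add_left]
  ring

/-- Nontriviality of `L²(ℝⁿ)`. -/
lemma exists_ne_zero_L2 (n : ℕ) : ∃ f : L2 n, f ≠ 0 := by
  have hball : MeasurableSet (Metric.ball (0 : RV n) 1) := measurableSet_ball
  have hlt : volume (Metric.ball (0 : RV n) 1) < ⊤ := measure_ball_lt_top
  have hpos : 0 < volume (Metric.ball (0 : RV n) 1) :=
    Metric.measure_ball_pos _ _ one_pos
  refine ⟨indicatorConstLp 2 hball hlt.ne (1 : ℂ), fun h0 => ?_⟩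
  have hnorm := norm_indicatorConstLp (μ := (volume : Measure (RV n)))
    (hs := hball) (hμs := hlt.ne) (c := (1 : ℂ)) (two_ne_zero) (by norm_num)
  rw [h0, norm_zero] at hnorm
  have htR : 0 < (volume (Metric.ball (0 : RV n) 1)).toReal :=
    ENNReal.toReal_pos hpos.ne' hlt.ne
  have : (0:ℝ) < ‖(1:ℂ)‖ * (volume (Metric.ball (0 : RV n) 1)).toReal ^ (1 / ENNReal.toReal 2) := by
    apply mul_pos (by simp)
    exact Real.rpow_pos_of_pos htR _
  rw [measureReal_def] at hnorm
  rw [← hnorm] at this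
  exact lt_irrefl _ this

lemma one_ne_zero_L2op (n : ℕ) : (1 : L2 n →L[ℂ] L2 n) ≠ 0 := by
  intro h1
  obtain ⟨f, hf⟩ := exists_ne_zero_L2 n
  apply hf
  calc f = (1 : L2 n →L[ℂ] L2 n) f := rfl
    _ = (0 : L2 n →L[ℂ] L2 n) f := by rw [h1]
    _ = 0 := rfl

lemma TFSp_ne_zero {n : ℕ} (s : RV n × RV n) : TFSp s ≠ 0 := by
  intro h0
  have hm := TFSp_mul' s (-s)
  rw [h0, zero_mul, add_neg_cancel, TFSp_zero] at hm
  rcases smul_eq_zero.1 hm.symm with hc | h1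
  · exact e2pi_ne_zero _ hc
  · exact one_ne_zero_L2op n h1

/-- The character `z ↦ e^{2πi σ(z,s)}` of the additive group `ℝ²ⁿ`. -/
def chi {n : ℕ} (s : RV n × RV n) : Multiplicative (RV n × RV n) →* ℂ where
  toFun z := e2pi (sform (Multiplicative.toAdd z) s)
  map_one' := by
    show e2pi (sform (Multiplicative.toAdd (1 : Multiplicative (RV n × RV n))) s) = 1
    have h0 : Multiplicative.toAdd (1 : Multiplicative (RV n × RV n)) = (0 : RV n × RV n) := rfl
    rw [h0]
    simp [sform, dotR_zero_left, dotR_zero_right, e2pi_zero]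
  map_mul' z w := by
    rw [← e2pi_add]
    congr 1
    simp only [toAdd_mul, sform, Prod.fst_add, Prod.snd_add, dotR_add_left, dotR_add_right]
    ring

lemma chi_apply {n : ℕ} (s : RV n × RV n) (z : Multiplicative (RV n × RV n)) :
    chi s z = e2pi (sform (Multiplicative.toAdd z) s) := rfl

lemma sform_smul {n : ℕ} (t : ℝ) (z s : RV n × RV n) :
    sform (t • z) s = t * sform z s := by
  simp only [sform, Prod.smul_fst, Prod.smul_snd, dotR_smul_left, dotR_smul_right]
  ring

lemma chi_injective {n : ℕ} : Function.Injective (chi (n := n)) := by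
  intro s s' hss
  by_contra hne
  have hu0 : s - s' ≠ 0 := sub_ne_zero.2 hne
  set u := s - s' with hu
  have key : ∀ z : RV n × RV n, e2pi (sform z u) = 1 := by
    intro z
    have h1 : chi s (Multiplicative.ofAdd z) = chi s' (Multiplicative.ofAdd z) := by rw [hss]
    rw [chi_apply, chi_apply, toAdd_ofAdd] at h1
    have h2 : sform z s = sform z u + sform z s' := by
      simp only [sform, hu, Prod.fst_sub, Prod.snd_sub, dotR_sub_right, dotR_sub_left]
      ring
    have h3 : e2pi (sform z u) * e2pi (sform z s') = 1 * e2pi (sform z s') := by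
      rw [← e2pi_add, ← h2, h1, one_mul]
    exact mul_right_cancel₀ (e2pi_ne_zero _) h3
  obtain ⟨z0, hz0⟩ : ∃ z0 : RV n × RV n, sform z0 u ≠ 0 := by
    by_cases h2 : u.2 = 0
    · have h1 : u.1 ≠ 0 := by
        intro h1
        exact hu0 (Prod.ext h1 h2)
      refine ⟨((0 : RV n), u.1), ?_⟩
      simp only [sform, dotR_zero_left]
      intro hcon
      apply h1
      apply dotR_self_eq_zero
      have : dotR 0 u.2 = 0 := dotR_zero_left _
      linarith [this ▸ hcon]
    · refine ⟨(u.2, (0 : RV n)), ?_⟩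
      simp only [sform, dotR_zero_right]
      intro hcon
      apply h2
      apply dotR_self_eq_zero
      linarith [hcon]
  have hval := key ((1 / (2 * sform z0 u)) • z0)
  rw [sform_smul] at hval
  have : (1 / (2 * sform z0 u)) * sform z0 u = 1/2 := by
    field_simp
  rw [this, e2pi_half] at hval
  norm_num at hval

/-- Operator-level linear independence of the time–frequency shifts. -/
lemma tfs_indep {n : ℕ} (e : (RV n × RV n) →₀ ℂ)
    (h : (e.sum fun s γ => γ • TFSp s) = (0 : L2 n →L[ℂ] L2 n)) : e = 0 := by
  classical
  have li : LinearIndependent ℂ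
      (fun s : RV n × RV n => ((chi (n := n) s) : Multiplicative (RV n × RV n) → ℂ)) :=
    (linearIndependent_monoidHom (Multiplicative (RV n × RV n)) ℂ).comp chi chi_injective
  ext s₀
  rw [Finsupp.coe_zero, Pi.zero_apply]
  by_cases hs₀ : s₀ ∈ e.support
  swap
  · exact Finsupp.notMem_support_iff.1 hs₀
  have hT := TFSp_ne_zero (n := n) s₀
  have hf : ∃ f : L2 n, TFSp s₀ f ≠ 0 := by
    by_contra hc
    push_neg at hc
    exact hT (ContinuousLinearMap.ext fun f => by simp [hc f])
  obtain ⟨f, hf⟩ := hf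
  set v : L2 n := TFSp s₀ f with hv
  have key : ∀ z : RV n × RV n,
      ∑ s ∈ e.support, (e s * e2pi (sform z s)) • TFSp s = 0 := by
    intro z
    have h0 : TFSp z * (e.sum fun s γ => γ • TFSp s) * TFSp (-z) = 0 := by
      rw [h, mul_zero, zero_mul]
    rw [Finsupp.sum, Finset.mul_sum, Finset.sum_mul] at h0
    have hterm : ∀ s ∈ e.support,
        TFSp z * (e s • TFSp s) * TFSp (-z)
          = e2pi (-(dotR z.1 z.2)) • ((e s * e2pi (sform z s)) • TFSp s) := by
      intro s _
      rw [mul_smul_comm, smul_mul_assoc, TFSp_conj, smul_smul, smul_smul, smul_smul]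
      congr 1
      ring
    rw [Finset.sum_congr rfl hterm, ← Finset.smul_sum] at h0
    rcases smul_eq_zero.1 h0 with hc | hs
    · exact absurd hc (e2pi_ne_zero _)
    · exact hs
  have hrel : ∑ s ∈ e.support,
      (e s * (inner ℂ v (TFSp s f) : ℂ)) •
        ((chi (n := n) s : Multiplicative (RV n × RV n) → ℂ)) = 0 := by
    funext z
    have h1 := key (Multiplicative.toAdd z)
    have h2 : ∑ s ∈ e.support, (e s * e2pi (sform (Multiplicative.toAdd z) s)) • (TFSp s f)
        = (0 : L2 n) := by
      have h2' := congrArg (fun T : L2 n →L[ℂ] L2 n => T f) h1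
      simpa only [ContinuousLinearMap.sum_apply, ContinuousLinearMap.smul_apply,
        ContinuousLinearMap.zero_apply] using h2'
    have h3 := congrArg (fun w : L2 n => (inner ℂ v w : ℂ)) h2
    simp only [inner_sum, inner_smul_right, inner_zero_right] at h3
    simp only [Finset.sum_apply, Pi.smul_apply, Pi.zero_apply, smul_eq_mul, chi_apply]
    rw [← h3]
    exact Finset.sum_congr rfl fun s _ => by ring
  have hcoef := linearIndependent_iff'.1 li e.support
    (fun s => e s * (inner ℂ v (TFSp s f) : ℂ)) hrel s₀ hs₀
  have hvv : (inner ℂ v v : ℂ) ≠ 0 := by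
    rw [Ne, inner_self_eq_zero]
    exact hf
  rcases mul_eq_zero.1 hcoef with h' | h'
  · exact h'
  · exact absurd h' hvv

/-- The pairing used to pick a generic linear functional. -/
def dotP {n : ℕ} (u z : RV n × RV n) : ℝ := dotR u.1 z.1 + dotR u.2 z.2

lemma dotP_self_eq_zero {n : ℕ} {u : RV n × RV n} (h : dotP u u = 0) : u = 0 := by
  have h1 : dotR u.1 u.1 = 0 ∧ dotR u.2 u.2 = 0 := by
    constructor <;> [skip; skip] <;>
      · have := dotR_self_nonneg u.1
        have := dotR_self_nonneg u.2
        rw [dotP] at h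
        linarith
  exact Prod.ext (dotR_self_eq_zero h1.1) (dotR_self_eq_zero h1.2)

lemma dotP_add_smul {n : ℕ} (u d₀ : RV n × RV n) (t : ℝ) (z : RV n × RV n) :
    dotP (u + t • d₀) z = dotP u z + t * dotP d₀ z := by
  simp only [dotP, Prod.fst_add, Prod.snd_add, Prod.smul_fst, Prod.smul_snd,
    dotR_add_left, dotR_smul_left]
  ring

lemma dotP_sub_right {n : ℕ} (u z w : RV n × RV n) :
    dotP u (z - w) = dotP u z - dotP u w := by
  simp only [dotP, Prod.fst_sub, Prod.snd_sub, dotR_sub_right]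
  ring

lemma dotP_add_right {n : ℕ} (u z w : RV n × RV n) :
    dotP u (z + w) = dotP u z + dotP u w := by
  simp only [dotP, Prod.fst_add, Prod.snd_add, dotR_add_right]
  ring

/-- A functional not vanishing on a given finite set of nonzero vectors. -/
lemma exists_dotP_ne {n : ℕ} (D : Finset (RV n × RV n)) (hD : ∀ d ∈ D, d ≠ 0) :
    ∃ u : RV n × RV n, ∀ d ∈ D, dotP u d ≠ 0 := by
  classical
  induction D using Finset.induction_on with
  | empty => exact ⟨0, by simp⟩
  | insert d₀ D' hnotmem ih =>
    obtain ⟨u, hu⟩ := ih fun d hd => hD d (Finset.mem_insert_of_mem hd)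
    have hd0 : d₀ ≠ 0 := hD d₀ (Finset.mem_insert_self _ _)
    set T : Finset ℝ := (insert d₀ D').image (fun d => -(dotP u d) / (dotP d₀ d)) with hT
    obtain ⟨t, ht⟩ := Infinite.exists_notMem_finset T
    refine ⟨u + t • d₀, fun d hd h0 => ?_⟩
    rw [dotP_add_smul] at h0
    by_cases hc : dotP d₀ d = 0
    · rcases Finset.mem_insert.1 hd with rfl | hdD
      · exact hd0 (dotP_self_eq_zero hc)
      · rw [hc, mul_zero, add_zero] at h0
        exact hu d hdD h0
    · apply ht
      rw [hT, Finset.mem_image]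
      refine ⟨d, hd, ?_⟩
      rw [div_eq_iff hc]
      linarith

end Statement6Aux


/-- For any subgroup `G ≤ ℝ²ⁿ`, the ring `ℂ*G` is a domain. -/
theorem statement6 (n : ℕ) (hn : 0 < n) (G : AddSubgroup (RV n × RV n))
    (α β : L2 n →L[ℂ] L2 n) (hα : α ∈ CGalg n G) (hβ : β ∈ CGalg n G)
    (h : α * β = 0) : α = 0 ∨ β = 0 := by
  classical
  by_cases hA : α = 0
  · exact Or.inl hA
  by_cases hB : β = 0
  · exact Or.inr hB
  exfalso
  -- extract finitely supported representations
  have hα' : α ∈ spanTFS n G := Submodule.mem_toSubalgebra.1 hα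
  have hβ' : β ∈ spanTFS n G := Submodule.mem_toSubalgebra.1 hβ
  rw [spanTFS] at hα' hβ'
  obtain ⟨c₀, hc₀⟩ := Finsupp.mem_span_range_iff_exists_finsupp.1 hα'
  obtain ⟨d₀, hd₀⟩ := Finsupp.mem_span_range_iff_exists_finsupp.1 hβ'
  set emb : G ↪ (RV n × RV n) := ⟨Subtype.val, Subtype.val_injective⟩ with hemb
  set c : (RV n × RV n) →₀ ℂ := c₀.embDomain emb with hcdef
  set d : (RV n × RV n) →₀ ℂ := d₀.embDomain emb with hddef
  have hc : (c.sum fun s a => a • TFSp s) = α := by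
    rw [hcdef, Finsupp.sum_embDomain]
    exact hc₀
  have hd : (d.sum fun s a => a • TFSp s) = β := by
    rw [hddef, Finsupp.sum_embDomain]
    exact hd₀
  set A : Finset (RV n × RV n) := c.support with hAdef
  set B : Finset (RV n × RV n) := d.support with hBdef
  have hAne : A.Nonempty := by
    rw [hAdef, Finset.nonempty_iff_ne_empty, Ne, Finsupp.support_eq_empty]
    intro hc0
    apply hA
    rw [← hc, hc0, Finsupp.sum_zero_index]
  have hBne : B.Nonempty := by
    rw [hBdef, Finset.nonempty_iff_ne_empty, Ne, Finsupp.support_eq_empty]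
    intro hd0
    apply hB
    rw [← hd, hd0, Finsupp.sum_zero_index]
  -- a generic functional injective on A ∪ B
  set Dset : Finset (RV n × RV n) :=
    (((A ∪ B) ×ˢ (A ∪ B)).image fun p => p.1 - p.2).filter (· ≠ 0) with hDdef
  obtain ⟨u, hu⟩ := exists_dotP_ne Dset (by
    intro dd hdd
    rw [hDdef, Finset.mem_filter] at hdd
    exact hdd.2)
  have hinj : ∀ g ∈ A ∪ B, ∀ g' ∈ A ∪ B, dotP u g = dotP u g' → g = g' := by
    intro g hg g' hg' heq
    by_contra hne
    have hmem : g - g' ∈ Dset := by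
      rw [hDdef, Finset.mem_filter]
      exact ⟨Finset.mem_image.2 ⟨(g, g'), Finset.mem_product.2 ⟨hg, hg'⟩, rfl⟩,
        sub_ne_zero.2 hne⟩
    apply hu _ hmem
    rw [dotP_sub_right, heq, sub_self]
  obtain ⟨as, hasA, hamax⟩ := A.exists_max_image (fun g => dotP u g) hAne
  obtain ⟨bs, hbsB, hbmax⟩ := B.exists_max_image (fun g => dotP u g) hBne
  -- the formal product
  set e : (RV n × RV n) →₀ ℂ :=
    ∑ p ∈ A ×ˢ B, Finsupp.single (p.1 + p.2) (c p.1 * d p.2 * e2pi (dotR p.1.1 p.2.2))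
    with hedef
  have hΦ : (e.sum fun s γ => γ • TFSp s)
      = ∑ p ∈ A ×ˢ B, (c p.1 * d p.2 * e2pi (dotR p.1.1 p.2.2)) • TFSp (p.1 + p.2) := by
    rw [← Finsupp.linearCombination_apply, hedef, map_sum]
    exact Finset.sum_congr rfl fun p _ => Finsupp.linearCombination_single ℂ _ _
  have hmul : α * β = e.sum fun s γ => γ • TFSp s := by
    rw [hΦ, ← hc, ← hd, Finsupp.sum, Finsupp.sum, Finset.sum_mul_sum,
      ← Finset.sum_product']
    refine Finset.sum_congr rfl fun p _ => ?_
    rw [smul_mul_smul_comm, TFSp_mul', smul_smul]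
  have he0 : e = 0 := tfs_indep e (by rw [← hmul, h])
  -- but the leading coefficient of `e` is nonzero
  have heval : e (as + bs) = c as * d bs * e2pi (dotR as.1 bs.2) := by
    rw [hedef, Finsupp.finset_sum_apply]
    rw [Finset.sum_eq_single_of_mem (as, bs) (Finset.mem_product.2 ⟨hasA, hbsB⟩)]
    · exact Finsupp.single_eq_same
    · intro p hp hne
      apply Finsupp.single_eq_of_ne
      intro hsum
      apply hne
      obtain ⟨hp1, hp2⟩ := Finset.mem_product.1 hp
      have hsum' : dotP u p.1 + dotP u p.2 = dotP u as + dotP u bs := by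
        rw [← dotP_add_right, ← dotP_add_right, hsum]
      have h1 : dotP u p.1 ≤ dotP u as := hamax p.1 hp1
      have h2 : dotP u p.2 ≤ dotP u bs := hbmax p.2 hp2
      have he1 : dotP u p.1 = dotP u as := by linarith
      have he2 : dotP u p.2 = dotP u bs := by linarith
      have hq1 : p.1 = as := hinj p.1 (Finset.mem_union_left _ hp1)
        as (Finset.mem_union_left _ hasA) he1
      have hq2 : p.2 = bs := hinj p.2 (Finset.mem_union_right _ hp2)
        bs (Finset.mem_union_right _ hbsB) he2
      exact Prod.ext hq1 hq2
  rw [he0] at heval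
  simp only [Finsupp.coe_zero, Pi.zero_apply] at heval
  have hcz : c as ≠ 0 := Finsupp.mem_support_iff.1 hasA
  have hdz : d bs ≠ 0 := Finsupp.mem_support_iff.1 hbsB
  exact (mul_ne_zero (mul_ne_zero hcz hdz) (e2pi_ne_zero _)) heval.symm


end
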